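/- arXiv:2110.14453 — 2 statements merged into one kernel-verified Lean document; each statement's English description precedes it below -/
import Mathlib

section
/- Let G and H be finite nonempty regular simple graphs. If G is conformable, then the direct product G × H is conformable. -/
open SimpleGraph

/-- Tensor (direct / categorical) product of simple graphs:
`(u, v)` is adjacent to `(u', v')` iff `u ~ u'` in `G` and `v ~ v'` in `H`. -/
def tensorProd {V W : Type*} (G : SimpleGraph V) (H : SimpleGraph W) :
    SimpleGraph (V × W) where
  Adj x y := G.Adj x.1 y.1 ∧ H.Adj x.2 y.2
  symm := ⟨fun _ _ h => ⟨h.1.symm, h.2.symm⟩⟩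
  loopless := ⟨fun x h => G.irrefl h.1⟩

instance {V W : Type*} (G : SimpleGraph V) (H : SimpleGraph W)
    [DecidableRel G.Adj] [DecidableRel H.Adj] : DecidableRel (tensorProd G H).Adj :=
  fun x y => inferInstanceAs (Decidable (G.Adj x.1 y.1 ∧ H.Adj x.2 y.2))

/-- `G` has a proper total coloring with `k` colors: adjacent vertices get distinct
colors, distinct incident edges get distinct colors, and each edge gets a color
distinct from those of both of its endpoints. -/
def HasTotalColoring {V : Type*} (G : SimpleGraph V) (k : ℕ) : Prop :=
  ∃ (cv : V → Fin k) (ce : Sym2 V → Fin k),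
    (∀ u v, G.Adj u v → cv u ≠ cv v) ∧
    (∀ u v w, G.Adj u v → G.Adj u w → v ≠ w → ce s(u, v) ≠ ce s(u, w)) ∧
    (∀ u v, G.Adj u v → ce s(u, v) ≠ cv u ∧ ce s(u, v) ≠ cv v)

/-- The total chromatic number: the least `k` such that `G` has a `k`-total coloring. -/
noncomputable def totalChromaticNumber {V : Type*} (G : SimpleGraph V) : ℕ :=
  sInf {k | HasTotalColoring G k}

/-- A regular graph of degree `d` is conformable if it has a proper vertex coloring with
`d + 1` colors such that every color class has cardinality of the same parity as `|V|`. -/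
def Conformable {V : Type*} [Fintype V] (G : SimpleGraph V) (d : ℕ) : Prop :=
  ∃ c : V → Fin (d + 1),
    (∀ u v, G.Adj u v → c u ≠ c v) ∧
    ∀ i : Fin (d + 1),
      (Finset.univ.filter fun v => c v = i).card % 2 = Fintype.card V % 2


open Finset

lemma aux_greedy_sum (c E : ℕ) : ∀ n, ∑ i ∈ Finset.range n, min c (E - i*c) = min E (n*c) := by
  intro n
  induction n with
  | zero => simp
  | succ n ih => rw [Finset.sum_range_succ, ih, Nat.succ_mul]; omega

def auxk (cc E i : ℕ) : ℕ := 2 * min cc (E - i * cc) + 1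
def auxB (cc E n : ℕ) : ℕ := ∑ l ∈ Finset.range n, auxk cc E l

lemma auxB_succ (cc E n : ℕ) : auxB cc E (n+1) = auxB cc E n + auxk cc E n :=
  Finset.sum_range_succ _ n

lemma auxk_pos (cc E i : ℕ) : 1 ≤ auxk cc E i := Nat.le_add_left 1 _

lemma auxk_le (cc E i : ℕ) : auxk cc E i ≤ 2 * cc + 1 := by
  unfold auxk
  have := min_le_left cc (E - i * cc)
  omega

lemma auxB_mono (cc E : ℕ) {a b : ℕ} (h : a ≤ b) : auxB cc E a ≤ auxB cc E b :=
  Finset.sum_le_sum_of_subset (Finset.range_subset_range.2 h)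

lemma auxB_block_exists (cc E : ℕ) :
    ∀ n x, x < auxB cc E n → ∃ i < n, auxB cc E i ≤ x ∧ x < auxB cc E (i+1) := by
  intro n
  induction n with
  | zero => intro x hx; simp [auxB] at hx
  | succ n ih =>
    intro x hx
    by_cases h : x < auxB cc E n
    · obtain ⟨i, hi, h1, h2⟩ := ih x h
      exact ⟨i, Nat.lt_succ_of_lt hi, h1, h2⟩
    · exact ⟨n, Nat.lt_succ_self n, Nat.le_of_not_lt h, hx⟩

lemma auxB_block_unique (cc E : ℕ) {i j x : ℕ}
    (h1 : auxB cc E i ≤ x) (h2 : x < auxB cc E (i+1))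
    (h3 : auxB cc E j ≤ x) (h4 : x < auxB cc E (j+1)) : i = j := by
  by_contra hne
  rcases Nat.lt_or_ge i j with h | h
  · have := auxB_mono cc E (show i + 1 ≤ j by omega)
    omega
  · have := auxB_mono cc E (show j + 1 ≤ i by omega)
    omega

lemma auxB_total (cc E n : ℕ) (h : E ≤ n * cc) : auxB cc E n = 2 * E + n := by
  unfold auxB auxk
  rw [Finset.sum_add_distrib, ← Finset.mul_sum, aux_greedy_sum cc E n]
  simp [min_eq_left h]

lemma aux_card_le (m t : ℕ) (h : t < m) :
    (Finset.univ.filter fun j : Fin m => t ≤ (j:ℕ)).card = m - t := by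
  have : (Finset.univ.filter fun j : Fin m => t ≤ (j:ℕ)) = Finset.Ici ⟨t, h⟩ := by
    ext j; simp [Fin.le_def]
  rw [this, Fin.card_Ici]

lemma aux_card_eq (m t : ℕ) (h : t < m) :
    (Finset.univ.filter fun j : Fin m => (j:ℕ) = t).card = 1 := by
  have : (Finset.univ.filter fun j : Fin m => (j:ℕ) = t) = {⟨t, h⟩} := by
    ext j; simp [Fin.ext_iff]
  rw [this, Finset.card_singleton]

lemma aux_card_equiv {α β : Type*} [Fintype α] [Fintype β] (r : α ≃ β)
    (P : β → Prop) [DecidablePred P] :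
    (Finset.univ.filter fun a => P (r a)).card = (Finset.univ.filter P).card := by
  apply Finset.card_bij (fun a _ => r a)
  · intro a ha; simp_all
  · intro a _ b _ hab; exact r.injective hab
  · intro b hb; exact ⟨r.symm b, by simp_all, by simp⟩

lemma aux_handshake {V : Type*} [Fintype V] (G : SimpleGraph V) [DecidableRel G.Adj]
    {d : ℕ} (hG : G.IsRegularOfDegree d) (hodd : Fintype.card V % 2 = 1) : d % 2 = 0 := by
  have h := SimpleGraph.sum_degrees_eq_twice_card_edges G
  have h2 : ∑ v : V, G.degree v = d * Fintype.card V := by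
    rw [Finset.sum_congr rfl fun v _ => hG v]
    simp [Finset.card_univ, mul_comm]
  have : (d * Fintype.card V) % 2 = 0 := by omega
  rw [Nat.mul_mod, hodd] at this
  omega

theorem conformable_tensorProd {V W : Type*} [Fintype V] [Fintype W]
    [Nonempty V] [Nonempty W]
    (G : SimpleGraph V) (H : SimpleGraph W) [DecidableRel G.Adj] [DecidableRel H.Adj]
    (dG dH : ℕ)
    (hG : G.IsRegularOfDegree dG) (hH : H.IsRegularOfDegree dH)
    (hconf : Conformable G dG) :
    Conformable (tensorProd G H) (dG * dH) := by
  obtain ⟨c, hprop, hpar⟩ := hconf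
  have hcardVW : Fintype.card (V × W) = Fintype.card V * Fintype.card W :=
    Fintype.card_prod V W
  have hW : dH < Fintype.card W := by
    have := H.degree_lt_card_verts (Classical.arbitrary W)
    rwa [hH] at this
  by_cases hdH0 : dH = 0
  · -- H is edgeless; constant coloring
    refine ⟨fun _ => ⟨0, Nat.succ_pos _⟩, ?_, ?_⟩
    · intro u v hadj _
      have h2 : v.2 ∈ H.neighborFinset u.2 := (H.mem_neighborFinset _ _).2 hadj.2
      have h0 : (H.neighborFinset u.2).card = 0 := by
        rw [show (H.neighborFinset u.2).card = H.degree u.2 from rfl, hH u.2, hdH0]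
      rw [Finset.card_eq_zero] at h0
      rw [h0] at h2
      exact absurd h2 (Finset.notMem_empty _)
    · intro i
      have hi : i = ⟨0, Nat.succ_pos _⟩ := by
        have h2 := i.isLt
        have h1 : dG * dH = 0 := by rw [hdH0, Nat.mul_zero]
        apply Fin.ext
        simp only [h1] at h2 ⊢
        omega
      subst hi
      have heq : (Finset.univ.filter fun _ : V × W =>
          (⟨0, Nat.succ_pos _⟩ : Fin (dG*dH+1)) = ⟨0, Nat.succ_pos _⟩) = Finset.univ := by
        simp
      rw [heq, Finset.card_univ]
  · have hdH1 : 1 ≤ dH := Nat.one_le_iff_ne_zero.2 hdH0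
    have hle : dG + 1 ≤ dG * dH + 1 := by
      have : dG ≤ dG * dH := Nat.le_mul_of_pos_right dG (by omega)
      omega
    by_cases hpar2 : Fintype.card V % 2 = 1 ∧ Fintype.card W % 2 = 1
    · -- hard case: both odd
      obtain ⟨hV1, hW1⟩ := hpar2
      have hdGe := aux_handshake G hG hV1
      have hdHe := aux_handshake H hH hW1
      obtain ⟨a, ha⟩ : ∃ a, dG = 2 * a := ⟨dG / 2, by omega⟩
      obtain ⟨t, ht⟩ : ∃ t, dH = 2 * t + 2 := ⟨dH / 2 - 1, by omega⟩
      set cc : ℕ := t + 1 with hcc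
      set E : ℕ := a * (2 * t + 1) with hE
      have hEle : E ≤ (dG + 1) * cc := by
        rw [hE, hcc, ha]
        nlinarith
      have hBtot : auxB cc E (dG + 1) = dG * dH + 1 := by
        rw [auxB_total cc E (dG+1) hEle, hE, ha, ht]
        ring
      have hkle : ∀ i, auxk cc E i ≤ dH + 1 := by
        intro i
        have := auxk_le cc E i
        omega
      have hbound : ∀ (i s : ℕ), i < dG + 1 →
          auxB cc E i + min s (auxk cc E i - 1) < dG * dH + 1 := by
        intro i s hi
        have h1 : min s (auxk cc E i - 1) ≤ auxk cc E i - 1 := min_le_right _ _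
        have h2 := auxB_succ cc E i
        have h3 : auxB cc E (i+1) ≤ auxB cc E (dG+1) := auxB_mono cc E (by omega)
        have h4 := auxk_pos cc E i
        omega
      set r : W ≃ Fin (Fintype.card W) := Fintype.equivFin W with hr
      refine ⟨fun p => ⟨auxB cc E (c p.1).val + min ((r p.2 : ℕ)) (auxk cc E (c p.1).val - 1),
        hbound _ _ (c p.1).isLt⟩, ?_, ?_⟩
      · -- proper
        intro u v hadj heq
        have hne : c u.1 ≠ c v.1 := hprop _ _ hadj.1
        apply hne
        have hval : auxB cc E (c u.1).val + min ((r u.2 : ℕ)) (auxk cc E (c u.1).val - 1)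
            = auxB cc E (c v.1).val + min ((r v.2 : ℕ)) (auxk cc E (c v.1).val - 1) :=
          congrArg Fin.val heq
        have key : ∀ (i s : ℕ), auxB cc E i ≤ auxB cc E i + min s (auxk cc E i - 1) ∧
            auxB cc E i + min s (auxk cc E i - 1) < auxB cc E (i+1) := by
          intro i s
          have h1 := auxk_pos cc E i
          have h2 : min s (auxk cc E i - 1) ≤ auxk cc E i - 1 := min_le_right _ _
          have h3 := auxB_succ cc E i
          omega
        obtain ⟨hA1, hA2⟩ := key (c u.1).val (r u.2 : ℕ)
        obtain ⟨hB1, hB2⟩ := key (c v.1).val (r v.2 : ℕ)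
        exact Fin.ext (auxB_block_unique cc E hA1 hA2 (hval ▸ hB1) (hval ▸ hB2))
      · -- parity
        intro x
        have hx : (x : ℕ) < auxB cc E (dG + 1) := by rw [hBtot]; exact x.isLt
        obtain ⟨i, hi, hx1, hx2⟩ := auxB_block_exists cc E (dG+1) x.val hx
        rw [auxB_succ cc E i] at hx2
        set i0 : Fin (dG+1) := ⟨i, hi⟩ with hi0
        have hkpos := auxk_pos cc E i
        have httle : x.val - auxB cc E i ≤ auxk cc E i - 1 := by omega
        have hfilter : (Finset.univ.filter fun p : V × W =>
            (⟨auxB cc E (c p.1).val + min ((r p.2 : ℕ)) (auxk cc E (c p.1).val - 1),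
              hbound _ _ (c p.1).isLt⟩ : Fin (dG * dH + 1)) = x)
            = (Finset.univ.filter fun u : V => c u = i0) ×ˢ
              (Finset.univ.filter fun w : W =>
                min ((r w : ℕ)) (auxk cc E i - 1) = x.val - auxB cc E i) := by
          ext ⟨u, w⟩
          simp only [Finset.mem_filter, Finset.mem_product, Finset.mem_univ, true_and]
          constructor
          · intro h
            have hval : auxB cc E (c u).val + min ((r w : ℕ)) (auxk cc E (c u).val - 1)
                = x.val := congrArg Fin.val h
            have hmle : min ((r w : ℕ)) (auxk cc E (c u).val - 1)
                ≤ auxk cc E (c u).val - 1 := min_le_right _ _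
            have hk1 := auxk_pos cc E (c u).val
            have hBs := auxB_succ cc E (c u).val
            have h1 : auxB cc E (c u).val ≤ x.val := by omega
            have h2 : (x.val : ℕ) < auxB cc E ((c u).val + 1) := by omega
            have hieq : (c u).val = i :=
              auxB_block_unique cc E h1 h2 hx1 (by rw [auxB_succ cc E i]; omega)
            refine ⟨Fin.ext hieq, ?_⟩
            rw [hieq] at hval
            omega
          · rintro ⟨h1, h2⟩
            have hcu : (c u).val = i := congrArg Fin.val h1
            apply Fin.ext
            simp only [hcu, h2]
            omega
        rw [hfilter, Finset.card_product]
        have hfib : (Finset.univ.filter fun w : W =>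
            min ((r w : ℕ)) (auxk cc E i - 1) = x.val - auxB cc E i).card % 2 = 1 := by
          have hkdH : auxk cc E i - 1 < Fintype.card W := by
            have := hkle i; omega
          by_cases hcase : x.val - auxB cc E i = auxk cc E i - 1
          · have heqf : (Finset.univ.filter fun w : W =>
                min ((r w : ℕ)) (auxk cc E i - 1) = x.val - auxB cc E i)
                = (Finset.univ.filter fun w : W => (auxk cc E i - 1) ≤ (r w : ℕ)) := by
              apply Finset.filter_congr
              intro w _
              rw [hcase]
              constructor
              · intro h; omega
              · intro h; omega
            rw [heqf, aux_card_equiv r (fun j : Fin (Fintype.card W) =>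
              (auxk cc E i - 1) ≤ (j : ℕ)), aux_card_le _ _ hkdH]
            have heven : (auxk cc E i - 1) % 2 = 0 := by
              unfold auxk
              omega
            omega
          · have htlt : x.val - auxB cc E i < auxk cc E i - 1 := by omega
            have heqf : (Finset.univ.filter fun w : W =>
                min ((r w : ℕ)) (auxk cc E i - 1) = x.val - auxB cc E i)
                = (Finset.univ.filter fun w : W => (r w : ℕ) = x.val - auxB cc E i) := by
              apply Finset.filter_congr
              intro w _
              constructor
              · intro h; omega
              · intro h; omega
            rw [heqf, aux_card_equiv r (fun j : Fin (Fintype.card W) =>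
              (j : ℕ) = x.val - auxB cc E i), aux_card_eq _ _ (by omega)]
        rw [Nat.mul_mod, hpar i0, hfib, hcardVW, Nat.mul_mod (Fintype.card V), hV1, hW1]
    · -- some side even
      have hVW0 : (Fintype.card V * Fintype.card W) % 2 = 0 := by
        rcases Nat.mod_two_eq_zero_or_one (Fintype.card V) with h1 | h1
        · rw [Nat.mul_mod, h1]; simp
        · rcases Nat.mod_two_eq_zero_or_one (Fintype.card W) with h2 | h2
          · rw [Nat.mul_mod, h2, Nat.mul_zero]
          · exact absurd ⟨h1, h2⟩ hpar2
      refine ⟨fun p => Fin.castLE hle (c p.1), ?_, ?_⟩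
      · intro u v hadj heq
        exact hprop _ _ hadj.1 (Fin.castLE_injective hle heq)
      · intro x
        rw [hcardVW]
        by_cases h : (x : ℕ) < dG + 1
        · set i0 : Fin (dG+1) := ⟨x.val, h⟩ with hi0
          have hfilter : (Finset.univ.filter fun p : V × W => Fin.castLE hle (c p.1) = x)
              = (Finset.univ.filter fun u : V => c u = i0) ×ˢ (Finset.univ : Finset W) := by
            ext ⟨u, w⟩
            simp only [Finset.mem_filter, Finset.mem_product, Finset.mem_univ, true_and,
              and_true, Fin.ext_iff, Fin.coe_castLE, hi0]
          rw [hfilter, Finset.card_product, Finset.card_univ, Nat.mul_mod, hpar i0,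
            ← Nat.mul_mod]
        · have hfilter : (Finset.univ.filter fun p : V × W => Fin.castLE hle (c p.1) = x)
              = ∅ := by
            apply Finset.filter_false_of_mem
            intro p _ heq
            have h2 : ((c p.1) : ℕ) = (x : ℕ) := by rw [← heq]; rfl
            have h3 := (c p.1).isLt
            omega
          rw [hfilter]
          simp [hVW0]
end

section
/- Let m, m', n, n' be positive integers with m ≠ m' or n ≠ n'. Then the direct product of complete bipartite graphs K_{m,m'} × K_{n,n'} is Type 1, i.e., χ_T(K_{m,m'} × K_{n,n'}) = max(m,m') · max(n,n') + 1. -/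
open SimpleGraph

namespace TPAux

@[simp] lemma tensor_adj {V W : Type*} (G : SimpleGraph V) (H : SimpleGraph W)
    (x y : V × W) : (tensorProd G H).Adj x y ↔ G.Adj x.1 y.1 ∧ H.Adj x.2 y.2 := Iff.rfl

lemma mul_add_lt {i a j b : ℕ} (hi : i < a) (hj : j < b) : i * b + j < a * b := by
  calc i * b + j < i * b + b := by omega
    _ = (i + 1) * b := by ring
    _ ≤ a * b := Nat.mul_le_mul_right b hi

lemma mul_add_inj {i i' j j' b : ℕ} (hj : j < b) (hj' : j' < b)
    (hE : i * b + j = i' * b + j') : i = i' ∧ j = j' := by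
  have hb : 0 < b := lt_of_le_of_lt (Nat.zero_le j) hj
  have e1 : (b * i + j) / b = i := by
    rw [Nat.mul_add_div hb, Nat.div_eq_of_lt hj, Nat.add_zero]
  have e2 : (b * i' + j') / b = i' := by
    rw [Nat.mul_add_div hb, Nat.div_eq_of_lt hj', Nat.add_zero]
  rw [Nat.mul_comm i b, Nat.mul_comm i' b] at hE
  have hii : i = i' := by rw [← e1, ← e2, hE]
  subst hii
  exact ⟨rfl, Nat.add_left_cancel hE⟩

lemma mod_cancel {x j j' b : ℕ} (hj : j < b) (hj' : j' < b) (hne : j ≠ j') :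
    (x + j) % b ≠ (x + j') % b := by
  intro hE
  have := Nat.ModEq.add_left_cancel' x hE
  rw [Nat.ModEq, Nat.mod_eq_of_lt hj, Nat.mod_eq_of_lt hj'] at this
  exact hne this

def cvPair (a b e o : ℕ) : ℕ :=
  if a < b then b else if b < a then (e + b) % a else a + o

lemma cvPair_lt {a b e o MN : ℕ} (ha : a ≤ MN) (hb : b ≤ MN) (he : e < a)
    (heq : a = b → a + o ≤ MN) : cvPair a b e o < MN + 1 := by
  unfold cvPair
  split
  · omega
  · split
    · have := Nat.mod_lt (e + b) (y := a) (by omega)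
      omega
    · have := heq (by omega)
      omega

lemma cvPair_ne {a b ea eb : ℕ} (hea : ea < a) (heb : eb < b) :
    cvPair a b ea 0 ≠ cvPair b a eb 1 := by
  unfold cvPair
  rcases lt_trichotomy a b with hlt | heqq | hgt
  · rw [if_pos hlt, if_neg (by omega), if_pos hlt]
    have := Nat.mod_lt (eb + a) (y := b) (by omega)
    omega
  · rw [if_neg (by omega), if_neg (by omega), if_neg (by omega), if_neg (by omega)]
    omega
  · rw [if_neg (by omega), if_pos hgt, if_pos hgt]
    have := Nat.mod_lt (ea + b) (y := a) (by omega)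
    omega

lemma ce_ne_cv {a b ea eb o : ℕ} (hea : ea < a) (heb : eb < b) :
    (ea + eb) % max a b ≠ cvPair a b ea o := by
  unfold cvPair
  rcases lt_trichotomy a b with hlt | heqq | hgt
  · rw [if_pos hlt, max_eq_right hlt.le]
    have := Nat.mod_lt (ea + eb) (y := b) (by omega)
    omega
  · rw [if_neg (by omega), if_neg (by omega), max_eq_left heqq.ge]
    have := Nat.mod_lt (ea + eb) (y := a) (by omega)
    omega
  · rw [if_neg (by omega), if_pos hgt, max_eq_left hgt.le]
    exact mod_cancel (by omega) (by omega) (by omega)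

lemma eq_max {x X y Y : ℕ} (hx : x ≤ X) (hy : y ≤ Y) (h0X : 0 < X) (h0Y : 0 < Y)
    (hE : x * y = X * Y) : x = X ∧ y = Y := by
  constructor
  · by_contra hne
    have h2 : x * y < X * Y :=
      Nat.mul_lt_mul_of_lt_of_le (lt_of_le_of_ne hx hne) hy h0Y
    omega
  · by_contra hne
    have h2 : y * x < Y * X :=
      Nat.mul_lt_mul_of_lt_of_le (lt_of_le_of_ne hy hne) hx h0X
    rw [Nat.mul_comm y x, Nat.mul_comm Y X] at h2
    omega

section Defs

variable (m m' n n' : ℕ)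

def eIdx : (Fin m ⊕ Fin m') × (Fin n ⊕ Fin n') → ℕ
  | (Sum.inl i, Sum.inl j) => i.val * n + j.val
  | (Sum.inl i, Sum.inr j) => i.val * n' + j.val
  | (Sum.inr i, Sum.inl j) => i.val * n + j.val
  | (Sum.inr i, Sum.inr j) => i.val * n' + j.val

def sIdx : (Fin m ⊕ Fin m') × (Fin n ⊕ Fin n') → ℕ
  | (Sum.inl _, Sum.inl _) => m * n
  | (Sum.inl _, Sum.inr _) => m * n'
  | (Sum.inr _, Sum.inl _) => m' * n
  | (Sum.inr _, Sum.inr _) => m' * n'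

def tIdx : (Fin m ⊕ Fin m') × (Fin n ⊕ Fin n') → ℕ
  | (Sum.inl _, Sum.inl _) => m' * n'
  | (Sum.inl _, Sum.inr _) => m' * n
  | (Sum.inr _, Sum.inl _) => m * n'
  | (Sum.inr _, Sum.inr _) => m * n

def oIdx : (Fin m ⊕ Fin m') × (Fin n ⊕ Fin n') → ℕ
  | (Sum.inl _, _) => 0
  | (Sum.inr _, _) => 1

def cvN (v : (Fin m ⊕ Fin m') × (Fin n ⊕ Fin n')) : ℕ :=
  cvPair (sIdx m m' n n' v) (tIdx m m' n n' v) (eIdx m m' n n' v) (oIdx m m' n n' v)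

def ceN (u v : (Fin m ⊕ Fin m') × (Fin n ⊕ Fin n')) : ℕ :=
  (eIdx m m' n n' u + eIdx m m' n n' v) % max (sIdx m m' n n' u) (sIdx m m' n n' v)

lemma ceN_comm (u v : (Fin m ⊕ Fin m') × (Fin n ⊕ Fin n')) :
    ceN m m' n n' u v = ceN m m' n n' v u := by
  unfold ceN
  rw [Nat.add_comm (eIdx m m' n n' u), Nat.max_comm]

variable {m m' n n'}

lemma sIdx_pos (hm : 0 < m) (hm' : 0 < m') (hn : 0 < n) (hn' : 0 < n') (v : (Fin m ⊕ Fin m') × (Fin n ⊕ Fin n')) : 0 < sIdx m m' n n' v := by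
  rcases v with ⟨i | i, j | j⟩ <;> simp only [sIdx] <;> apply Nat.mul_pos <;> assumption

lemma sIdx_le (v : (Fin m ⊕ Fin m') × (Fin n ⊕ Fin n')) :
    sIdx m m' n n' v ≤ max m m' * max n n' := by
  rcases v with ⟨i | i, j | j⟩ <;> simp only [sIdx] <;>
    exact Nat.mul_le_mul (by simp) (by simp)

lemma strict1 (hm : 0 < m) (hn : 0 < n) (h : m ≠ m' ∨ n ≠ n') (hE : m' * n' = m * n) :
    m' * n' < max m m' * max n n' := by
  by_contra hge
  have h1 : m' * n' ≤ max m m' * max n n' :=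
    Nat.mul_le_mul (le_max_right _ _) (le_max_right _ _)
  have h2 : m * n ≤ max m m' * max n n' :=
    Nat.mul_le_mul (le_max_left _ _) (le_max_left _ _)
  have hM : 0 < max m m' := lt_of_lt_of_le hm (le_max_left _ _)
  have hN : 0 < max n n' := lt_of_lt_of_le hn (le_max_left _ _)
  have e1 : m' * n' = max m m' * max n n' := by omega
  have e2 : m * n = max m m' * max n n' := by omega
  obtain ⟨a1, a2⟩ := eq_max (le_max_right m m') (le_max_right n n') hM hN e1
  obtain ⟨b1, b2⟩ := eq_max (le_max_left m m') (le_max_left n n') hM hN e2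
  rcases h with hh | hh <;> omega

lemma strict2 (hm : 0 < m) (hn : 0 < n) (h : m ≠ m' ∨ n ≠ n') (hE : m' * n = m * n') :
    m' * n < max m m' * max n n' := by
  by_contra hge
  have h1 : m' * n ≤ max m m' * max n n' :=
    Nat.mul_le_mul (le_max_right _ _) (le_max_left _ _)
  have h2 : m * n' ≤ max m m' * max n n' :=
    Nat.mul_le_mul (le_max_left _ _) (le_max_right _ _)
  have hM : 0 < max m m' := lt_of_lt_of_le hm (le_max_left _ _)
  have hN : 0 < max n n' := lt_of_lt_of_le hn (le_max_left _ _)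
  have e1 : m' * n = max m m' * max n n' := by omega
  have e2 : m * n' = max m m' * max n n' := by omega
  obtain ⟨a1, a2⟩ := eq_max (le_max_right m m') (le_max_left n n') hM hN e1
  obtain ⟨b1, b2⟩ := eq_max (le_max_left m m') (le_max_right n n') hM hN e2
  rcases h with hh | hh <;> omega

lemma cvN_lt (hm : 0 < m) (hn : 0 < n) (h : m ≠ m' ∨ n ≠ n') (v : (Fin m ⊕ Fin m') × (Fin n ⊕ Fin n')) :
    cvN m m' n n' v < max m m' * max n n' + 1 := by
  rcases v with ⟨i | i, j | j⟩ <;>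
    simp only [cvN, sIdx, tIdx, eIdx, oIdx]
  · exact cvPair_lt (Nat.mul_le_mul (le_max_left _ _) (le_max_left _ _))
      (Nat.mul_le_mul (le_max_right _ _) (le_max_right _ _))
      (mul_add_lt i.isLt j.isLt)
      (fun _ => by simpa using Nat.mul_le_mul (le_max_left m m') (le_max_left n n'))
  · exact cvPair_lt (Nat.mul_le_mul (le_max_left _ _) (le_max_right _ _))
      (Nat.mul_le_mul (le_max_right _ _) (le_max_left _ _))
      (mul_add_lt i.isLt j.isLt)
      (fun _ => by simpa using Nat.mul_le_mul (le_max_left m m') (le_max_right n n'))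
  · exact cvPair_lt (Nat.mul_le_mul (le_max_right _ _) (le_max_left _ _))
      (Nat.mul_le_mul (le_max_left _ _) (le_max_right _ _))
      (mul_add_lt i.isLt j.isLt)
      (fun hE => Nat.succ_le_of_lt (strict2 hm hn h hE))
  · exact cvPair_lt (Nat.mul_le_mul (le_max_right _ _) (le_max_right _ _))
      (Nat.mul_le_mul (le_max_left _ _) (le_max_left _ _))
      (mul_add_lt i.isLt j.isLt)
      (fun hE => Nat.succ_le_of_lt (strict1 hm hn h hE))

lemma ceN_lt (hm : 0 < m) (hm' : 0 < m') (hn : 0 < n) (hn' : 0 < n') (u v : (Fin m ⊕ Fin m') × (Fin n ⊕ Fin n')) :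
    ceN m m' n n' u v < max m m' * max n n' + 1 := by
  have h1 : 0 < max (sIdx m m' n n' u) (sIdx m m' n n' v) :=
    lt_of_lt_of_le (sIdx_pos hm hm' hn hn' u) (le_max_left _ _)
  have h2 : max (sIdx m m' n n' u) (sIdx m m' n n' v) ≤ max m m' * max n n' :=
    max_le (sIdx_le u) (sIdx_le v)
  have h3 := Nat.mod_lt (eIdx m m' n n' u + eIdx m m' n n' v) h1
  calc ceN m m' n n' u v < max (sIdx m m' n n' u) (sIdx m m' n n' v) := h3
    _ ≤ max m m' * max n n' := h2
    _ < max m m' * max n n' + 1 := Nat.lt_succ_self _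

lemma lower_aux {V : Type*} {G : SimpleGraph V} {k : ℕ} (hc : HasTotalColoring G k)
    {ι : Type*} [Fintype ι] (v₀ : V) (w : ι → V) (hw : Function.Injective w)
    (hadj : ∀ i, G.Adj v₀ (w i)) : Fintype.card ι + 1 ≤ k := by
  obtain ⟨cv, ce, h1, h2, h3⟩ := hc
  have hcard : Fintype.card (Option ι) ≤ Fintype.card (Fin k) := by
    apply Fintype.card_le_of_injective (fun o => o.elim (cv v₀) (fun i => ce s(v₀, w i)))
    intro o o' heq
    match o, o' with
    | none, none => rfl
    | none, some i => exact absurd heq.symm ((h3 v₀ (w i) (hadj i)).1)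
    | some i, none => exact absurd heq ((h3 v₀ (w i) (hadj i)).1)
    | some i, some i' =>
      by_contra hne
      have hii : i ≠ i' := fun hh => hne (by rw [hh])
      exact h2 v₀ (w i) (w i') (hadj i) (hadj i') (fun hh => hii (hw hh)) heq
  simpa using hcard

end Defs
end TPAux

open TPAux in
theorem completeBipartite_tensor_type1 (m m' n n' : ℕ)
    (hm : 0 < m) (hm' : 0 < m') (hn : 0 < n) (hn' : 0 < n')
    (h : m ≠ m' ∨ n ≠ n') :
    totalChromaticNumber (tensorProd (completeBipartiteGraph (Fin m) (Fin m'))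
        (completeBipartiteGraph (Fin n) (Fin n'))) = max m m' * max n n' + 1 := by
  classical
  have hK : 0 < max m m' * max n n' + 1 := Nat.succ_pos _
  have upper : HasTotalColoring (tensorProd (completeBipartiteGraph (Fin m) (Fin m'))
      (completeBipartiteGraph (Fin n) (Fin n'))) (max m m' * max n n' + 1) := by
    refine ⟨fun v => ⟨cvN m m' n n' v % (max m m' * max n n' + 1), Nat.mod_lt _ hK⟩,
      Sym2.lift ⟨fun u v => ⟨ceN m m' n n' u v % (max m m' * max n n' + 1), Nat.mod_lt _ hK⟩,
        fun u v => by simp only [ceN_comm m m' n n' u v]⟩, ?_, ?_, ?_⟩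
    · -- vertex-vertex
      intro u v hadj
      apply Fin.ne_of_val_ne
      dsimp only
      rw [Nat.mod_eq_of_lt (cvN_lt hm hn h _), Nat.mod_eq_of_lt (cvN_lt hm hn h _)]
      obtain ⟨u1, u2⟩ := u; obtain ⟨v1, v2⟩ := v
      rcases u1 with i | i <;> rcases u2 with j | j <;> rcases v1 with p | p <;>
        rcases v2 with q | q <;> simp only [tensor_adj, completeBipartiteGraph_adj] at hadj <;>
        simp only [Sum.isLeft_inl, Sum.isRight_inl, Sum.isLeft_inr, Sum.isRight_inr,
          and_true, true_and, and_false, false_and, or_false, false_or,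
          Bool.true_eq_false, Bool.false_eq_true] at hadj <;>
        simp only [cvN, sIdx, tIdx, eIdx, oIdx] <;>
        first
          | exact cvPair_ne (mul_add_lt i.isLt j.isLt) (mul_add_lt p.isLt q.isLt)
          | exact (cvPair_ne (mul_add_lt p.isLt q.isLt) (mul_add_lt i.isLt j.isLt)).symm
    · -- edge-edge
      intro u v w hv hw hvw
      simp only [Sym2.lift_mk]
      apply Fin.ne_of_val_ne
      dsimp only
      rw [Nat.mod_eq_of_lt (ceN_lt hm hm' hn hn' _ _),
        Nat.mod_eq_of_lt (ceN_lt hm hm' hn hn' _ _)]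
      obtain ⟨u1, u2⟩ := u; obtain ⟨v1, v2⟩ := v; obtain ⟨w1, w2⟩ := w
      rcases u1 with i | i <;> rcases u2 with j | j <;> rcases v1 with p | p <;>
        rcases v2 with q | q <;> rcases w1 with r | r <;> rcases w2 with s | s <;>
        simp only [tensor_adj, completeBipartiteGraph_adj, Sum.isLeft_inl, Sum.isRight_inl,
          Sum.isLeft_inr, Sum.isRight_inr, and_true, true_and, and_false, false_and,
          or_false, false_or, Bool.true_eq_false, Bool.false_eq_true] at hv hw <;>
        simp only [ceN, sIdx, eIdx]
      all_goals {
        apply mod_cancel (lt_of_lt_of_le (mul_add_lt p.isLt q.isLt) (le_max_right _ _))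
          (lt_of_lt_of_le (mul_add_lt r.isLt s.isLt) (le_max_right _ _))
        intro hE
        obtain ⟨h1, h2⟩ := mul_add_inj q.isLt s.isLt hE
        exact hvw (by rw [show p = r from Fin.ext h1, show q = s from Fin.ext h2])
      }
    · -- edge-vertex
      intro u v hadj
      obtain ⟨u1, u2⟩ := u; obtain ⟨v1, v2⟩ := v
      rcases u1 with i | i <;> rcases u2 with j | j <;> rcases v1 with p | p <;>
        rcases v2 with q | q <;>
        simp only [tensor_adj, completeBipartiteGraph_adj, Sum.isLeft_inl, Sum.isRight_inl,
          Sum.isLeft_inr, Sum.isRight_inr, and_true, true_and, and_false, false_and,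
          or_false, false_or, Bool.true_eq_false, Bool.false_eq_true] at hadj
      all_goals {
        constructor <;> {
          simp only [Sym2.lift_mk]
          apply Fin.ne_of_val_ne
          dsimp only
          rw [Nat.mod_eq_of_lt (ceN_lt hm hm' hn hn' _ _),
            Nat.mod_eq_of_lt (cvN_lt hm hn h _)]
          simp only [ceN, cvN, sIdx, tIdx, eIdx, oIdx]
          first
            | exact ce_ne_cv (mul_add_lt i.isLt j.isLt) (mul_add_lt p.isLt q.isLt)
            | { rw [Nat.add_comm (i.val * _ + j.val), Nat.max_comm]
                exact ce_ne_cv (mul_add_lt p.isLt q.isLt) (mul_add_lt i.isLt j.isLt) }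
        }
      }
  have lower : ∀ k, HasTotalColoring (tensorProd (completeBipartiteGraph (Fin m) (Fin m'))
      (completeBipartiteGraph (Fin n) (Fin n'))) k → max m m' * max n n' + 1 ≤ k := by
    intro k hk
    rcases le_total m m' with hmm | hmm <;> rcases le_total n n' with hnn | hnn
    · rw [max_eq_right hmm, max_eq_right hnn]
      have := lower_aux hk (ι := Fin m' × Fin n') (Sum.inl ⟨0, hm⟩, Sum.inl ⟨0, hn⟩)
        (fun p => (Sum.inr p.1, Sum.inr p.2))
        (fun a b hab => by
          obtain ⟨h1, h2⟩ := Prod.ext_iff.mp hab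
          exact Prod.ext (Sum.inr.inj h1) (Sum.inr.inj h2))
        (fun p => by simp [tensor_adj, completeBipartiteGraph_adj])
      simpa using this
    · rw [max_eq_right hmm, max_eq_left hnn]
      have := lower_aux hk (ι := Fin m' × Fin n) (Sum.inl ⟨0, hm⟩, Sum.inr ⟨0, hn'⟩)
        (fun p => (Sum.inr p.1, Sum.inl p.2))
        (fun a b hab => by
          obtain ⟨h1, h2⟩ := Prod.ext_iff.mp hab
          exact Prod.ext (Sum.inr.inj h1) (Sum.inl.inj h2))
        (fun p => by simp [tensor_adj, completeBipartiteGraph_adj])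
      simpa using this
    · rw [max_eq_left hmm, max_eq_right hnn]
      have := lower_aux hk (ι := Fin m × Fin n') (Sum.inr ⟨0, hm'⟩, Sum.inl ⟨0, hn⟩)
        (fun p => (Sum.inl p.1, Sum.inr p.2))
        (fun a b hab => by
          obtain ⟨h1, h2⟩ := Prod.ext_iff.mp hab
          exact Prod.ext (Sum.inl.inj h1) (Sum.inr.inj h2))
        (fun p => by simp [tensor_adj, completeBipartiteGraph_adj])
      simpa using this
    · rw [max_eq_left hmm, max_eq_left hnn]
      have := lower_aux hk (ι := Fin m × Fin n) (Sum.inr ⟨0, hm'⟩, Sum.inr ⟨0, hn'⟩)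
        (fun p => (Sum.inl p.1, Sum.inl p.2))
        (fun a b hab => by
          obtain ⟨h1, h2⟩ := Prod.ext_iff.mp hab
          exact Prod.ext (Sum.inl.inj h1) (Sum.inl.inj h2))
        (fun p => by simp [tensor_adj, completeBipartiteGraph_adj])
      simpa using this
  have hne : {k | HasTotalColoring (tensorProd (completeBipartiteGraph (Fin m) (Fin m'))
      (completeBipartiteGraph (Fin n) (Fin n'))) k}.Nonempty := ⟨_, upper⟩
  have h1 := Nat.sInf_le (show _ ∈ {k | HasTotalColoring (tensorProd (completeBipartiteGraph (Fin m) (Fin m'))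
      (completeBipartiteGraph (Fin n) (Fin n'))) k} from upper)
  have h2 := lower _ (Nat.sInf_mem hne)
  exact le_antisymm h1 h2
end
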